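/- For d = 2, the circulant matrices M_1 = [[cos θ, sin θ·e^{iα}],[sin θ·e^{iα}, cos θ]] and M_2 = [[cos η, sin η·e^{iβ}],[sin η·e^{iβ}, cos η]] have the property that the two entries of M_1† M_2 in its first row have equal modulus whenever sin α · sin β · tan 2θ · tan 2η = −1; therefore in that case their columns form a pair of mutually unbiased frames with overlap c = cos²(η−θ) + 2 sin η cos η sin θ cos θ (cos(α−β) − 1), provided the columns of each M_i are linearly independent. -/

import Mathlib

open Matrix Real

/-- For `d = 2`, the circulant matrices
`M₁ = [[cos θ, sin θ e^{iα}],[sin θ e^{iα}, cos θ]]` and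
`M₂ = [[cos η, sin η e^{iβ}],[sin η e^{iβ}, cos η]]` are such that, whenever
`sin α sin β tan 2θ tan 2η = −1`, the two entries of the first row of `M₁† M₂` have
equal modulus; hence (provided the columns of each `Mᵢ` are linearly independent)
their columns form a pair of mutually unbiased frames with overlap
`c = cos²(η−θ) + 2 sin η cos η sin θ cos θ (cos(α−β) − 1)`. -/
theorem qubit_circulant_muf (θ η α β : ℝ)
    (M₁ M₂ : Matrix (Fin 2) (Fin 2) ℂ)
    (hM₁ : M₁ = Matrix.of
      ![![(Real.cos θ : ℂ), (Real.sin θ : ℂ) * Complex.exp (Complex.I * α)],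
        ![(Real.sin θ : ℂ) * Complex.exp (Complex.I * α), (Real.cos θ : ℂ)]])
    (hM₂ : M₂ = Matrix.of
      ![![(Real.cos η : ℂ), (Real.sin η : ℂ) * Complex.exp (Complex.I * β)],
        ![(Real.sin η : ℂ) * Complex.exp (Complex.I * β), (Real.cos η : ℂ)]])
    (hcond : Real.sin α * Real.sin β * Real.tan (2 * θ) * Real.tan (2 * η) = -1)
    (hli₁ : LinearIndependent ℂ (fun k => M₁ᵀ k))
    (hli₂ : LinearIndependent ℂ (fun k => M₂ᵀ k)) :
    ‖(M₁ᴴ * M₂) 0 0‖ = ‖(M₁ᴴ * M₂) 0 1‖ ∧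
    ∀ j k, ‖(M₁ᴴ * M₂) j k‖ ^ 2 =
      Real.cos (η - θ) ^ 2 +
        2 * Real.sin η * Real.cos η * Real.sin θ * Real.cos θ *
          (Real.cos (α - β) - 1) := by
  have h1 : Real.cos (2*θ) ≠ 0 := by
    intro h; rw [Real.tan_eq_sin_div_cos, h] at hcond; simp at hcond
  have h2 : Real.cos (2*η) ≠ 0 := by
    intro h; rw [Real.tan_eq_sin_div_cos (2*η), h] at hcond; simp at hcond
  rw [Real.tan_eq_sin_div_cos, Real.tan_eq_sin_div_cos] at hcond
  field_simp at hcond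
  rw [Real.sin_two_mul, Real.sin_two_mul, Real.cos_two_mul, Real.cos_two_mul] at hcond
  have ea : Complex.exp (Complex.I * α) = Real.cos α + Real.sin α * Complex.I := by
    rw [mul_comm, Complex.exp_mul_I]; push_cast; ring
  have eb : Complex.exp (Complex.I * β) = Real.cos β + Real.sin β * Complex.I := by
    rw [mul_comm, Complex.exp_mul_I]; push_cast; ring
  have main : ∀ j k, ‖(M₁ᴴ * M₂) j k‖ ^ 2 =
      Real.cos (η - θ) ^ 2 +
        2 * Real.sin η * Real.cos η * Real.sin θ * Real.cos θ *
          (Real.cos (α - β) - 1) := by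
    intro j k
    rw [hM₁, hM₂, Complex.sq_norm, Real.cos_sub, Real.cos_sub]
    fin_cases j <;> fin_cases k <;>
      simp [Matrix.mul_apply, Fin.sum_univ_two, Matrix.conjTranspose_apply, ea, eb,
        Complex.normSq_apply, Complex.add_re, Complex.mul_re, Complex.mul_im,
        Complex.add_im, Complex.cos_ofReal_re, Complex.sin_ofReal_re] <;>
      ring_nf
    · simp only [Real.sin_sq]; ring
    · simp only [Real.sin_sq]; linear_combination -hcond
    · simp only [Real.sin_sq]; linear_combination -hcond
    · simp only [Real.sin_sq]; ring
  refine ⟨?_, main⟩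
  have h00 := main 0 0
  have h01 := main 0 1
  nlinarith [norm_nonneg ((M₁ᴴ * M₂) 0 0), norm_nonneg ((M₁ᴴ * M₂) 0 1), h00, h01]
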